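/- Fix a request sequence σ and a time t lying in some phase at which the requested vertex σ(t) is stale. Let c be the number of distinct clean vertices requested in the current phase strictly before time t, and let s be the number of stale vertices just before time t (including σ(t)). Then the probability, over the marking algorithm's random choices, that σ(t) is not covered by the marking algorithm's configuration just before serving σ(t) equals c/s. -/

import Mathlib

/-!
Paging model: vertices are `Fin n`, configurations are `k`-element subsets of `Fin n`.
`run` gives the distribution over configuration sequences of a randomized online
algorithm (given by its transition kernel), starting from `{0,…,k−1}`;
`markingKernel` is the marking algorithm.

Phases, clean and stale vertices are tracked by the fold `phaseState`:
at any moment, `prev` is the set of vertices requested in the previous phase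
(`{0,…,k−1}` for the first phase) and `cur` is the set of vertices requested so
far in the current phase (before the first phase, `prev = cur = {0,…,k−1}`).
A vertex is clean if it lies in neither `prev` nor `cur`, and stale if it lies
in `prev` but not in `cur`.  A request at (0-indexed) time `i` is a stale request
within a phase iff `σ(i) ∈ prev \ cur` and `cur.card < k` (if `cur.card = k` and
`σ(i) ∉ cur`, the request starts a new phase, for which it is clean).

STATEMENT: Fix a request sequence `σ` and a time `t` lying in some phase at which
the requested vertex `σ(t)` is stale.  Let `c` be the number of distinct clean
vertices requested in the current phase strictly before time `t` (that is,
`|cur \ prev|`) and let `s` be the number of stale vertices just before time `t`,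
including `σ(t)` (that is, `|prev \ cur|`).  Then the probability, over the
marking algorithm's random choices, that `σ(t)` is not covered by the marking
algorithm's configuration just before serving `σ(t)` equals `c/s`.
-/

open scoped ENNReal

/-- The initial configuration `{0, …, k−1}` as a subset of `Fin n`. -/
def initConf (k n : ℕ) : Finset (Fin n) :=
  Finset.univ.filter (fun v => (v : ℕ) < k)

/-- The cost of a sequence of configurations, starting from configuration `C`:
the sum over consecutive steps of the number of newly covered vertices. -/
def listCost {n : ℕ} : Finset (Fin n) → List (Finset (Fin n)) → ℕ
  | _, [] => 0
  | C, D :: L => (D \ C).card + listCost D L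

/-- `Cs` is a service of the request sequence `σ` by `k`-element configurations:
the `t`-th configuration covers the `t`-th request. -/
def Serves {n : ℕ} (k : ℕ) (σ : List (Fin n)) (Cs : List (Finset (Fin n))) : Prop :=
  List.Forall₂ (· ∈ ·) σ Cs ∧ ∀ C ∈ Cs, C.card = k

/-- The optimal offline cost of serving `σ`, starting from `{0,…,k−1}`. -/
noncomputable def OPT (k n : ℕ) (σ : List (Fin n)) : ℕ :=
  sInf {m | ∃ Cs, Serves k σ Cs ∧ listCost (initConf k n) Cs = m}

/-- A (transition kernel of a) randomized online algorithm: given the request history,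
the current configuration and a new request, produce a distribution over configurations. -/
abbrev Kernel (n : ℕ) := List (Fin n) → Finset (Fin n) → Fin n → PMF (Finset (Fin n))

/-- The distribution over configuration sequences induced by running kernel `K`
on request sequence `σ`, with history `hist` and current configuration `C`. -/
noncomputable def runFrom {n : ℕ} (K : Kernel n) :
    List (Fin n) → List (Fin n) → Finset (Fin n) → PMF (List (Finset (Fin n)))
  | [], _, _ => PMF.pure []
  | r :: rest, hist, C =>
      (K hist C r).bind fun C' =>
        (runFrom K rest (hist ++ [r]) C').map fun L => C' :: L

/-- The distribution over configuration sequences induced by running kernel `K`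
on request sequence `σ`, starting from the configuration `{0,…,k−1}`. -/
noncomputable def run {n : ℕ} (k : ℕ) (K : Kernel n) (σ : List (Fin n)) :
    PMF (List (Finset (Fin n))) :=
  runFrom K σ [] (initConf k n)

/-- The expected cost of the randomized online algorithm with kernel `K` on `σ`. -/
noncomputable def expCost {n : ℕ} (k : ℕ) (K : Kernel n) (σ : List (Fin n)) : ℝ :=
  ∑' Cs : List (Finset (Fin n)),
    ((run k K σ) Cs).toReal * (listCost (initConf k n) Cs : ℝ)

/-- One step of the marking process: mark `r`; if `k+1` vertices are marked,
erase all marks except the one on `r`. -/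
def markUpdate {n : ℕ} (k : ℕ) (M : Finset (Fin n)) (r : Fin n) : Finset (Fin n) :=
  if (insert r M).card = k + 1 then {r} else insert r M

/-- The set of marked vertices after processing the request sequence `σ`
(initially the vertices `{0,…,k−1}` are marked). -/
def marksAfter {n : ℕ} (k : ℕ) (σ : List (Fin n)) : Finset (Fin n) :=
  σ.foldl (markUpdate k) (initConf k n)

/-- The marking algorithm of type `(k,n)`: on a request `r`, first update the marks;
if `r` is covered do nothing, and otherwise evict a uniformly random unmarked
covered vertex and move its server to `r`. -/
noncomputable def markingKernel (k n : ℕ) : Kernel n := fun hist C r =>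
  let M := marksAfter k (hist ++ [r])
  if r ∈ C then PMF.pure C
  else if h : (C \ M).Nonempty then
    (PMF.uniformOfFinset (C \ M) h).map fun u => insert r (C.erase u)
  else PMF.pure (insert r (C.erase (if h2 : C.Nonempty then C.min' h2 else r)))

/-- The configuration after the first `t` requests, read off from the list `Cs`
of successive configurations (the configuration at time `0` is `{0,…,k−1}`). -/
def confAt {n : ℕ} (k : ℕ) (Cs : List (Finset (Fin n))) (t : ℕ) : Finset (Fin n) :=
  (initConf k n :: Cs).getD t (initConf k n)

/-- The phase bookkeeping state: the set of vertices requested in the previous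
phase, and the set of vertices requested so far in the current phase. -/
structure PhaseSt (n : ℕ) where
  prev : Finset (Fin n)
  cur : Finset (Fin n)

/-- Updating the phase state on a request `r`: if `r` was already requested in the
current phase nothing changes; if the current phase already contains `k` distinct
vertices, a new phase begins with `r`; otherwise `r` joins the current phase. -/
def phaseStep {n : ℕ} (k : ℕ) (s : PhaseSt n) (r : Fin n) : PhaseSt n :=
  if r ∈ s.cur then s
  else if s.cur.card = k then ⟨s.cur, {r}⟩
  else ⟨s.prev, insert r s.cur⟩

/-- The phase state after processing the request sequence `σ`; initially
`prev = cur = {0,…,k−1}`. -/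
def phaseState {n : ℕ} (k : ℕ) (σ : List (Fin n)) : PhaseSt n :=
  σ.foldl (phaseStep k) ⟨initConf k n, initConf k n⟩


section Helpers

lemma tsum_mul_bind {α β : Type*} (p : PMF α) (q : α → PMF β) (g : β → ℝ≥0∞) :
    ∑' b, g b * (p.bind q) b = ∑' a, p a * ∑' b, g b * q a b := by
  simp only [PMF.bind_apply]
  calc ∑' b, g b * ∑' a, p a * q a b
      = ∑' b, ∑' a, p a * (g b * q a b) := by
        refine tsum_congr fun b => ?_
        rw [← ENNReal.tsum_mul_left]
        exact tsum_congr fun a => by ring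
    _ = ∑' a, ∑' b, p a * (g b * q a b) := ENNReal.tsum_comm
    _ = ∑' a, p a * ∑' b, g b * q a b := by
        exact tsum_congr fun a => ENNReal.tsum_mul_left

lemma tsum_mul_map {α β : Type*} [DecidableEq β] (p : PMF α) (f : α → β) (g : β → ℝ≥0∞) :
    ∑' b, g b * (p.map f) b = ∑' a, g (f a) * p a := by
  rw [PMF.map, tsum_mul_bind]
  refine tsum_congr fun a => ?_
  rw [show ∑' b, g b * ((PMF.pure ∘ f) a) b = g (f a) from ?_, mul_comm]
  simp only [Function.comp, PMF.pure_apply, mul_ite, mul_one, mul_zero]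
  rw [tsum_eq_single (f a) ?_]
  · simp
  · intro b hb; simp [hb]


/-- Distribution of the configuration after processing requests. -/
noncomputable def confDistFrom {n : ℕ} (K : Kernel n) :
    List (Fin n) → List (Fin n) → Finset (Fin n) → PMF (Finset (Fin n))
  | [], _, C => PMF.pure C
  | r :: rest, hist, C => (K hist C r).bind fun C' => confDistFrom K rest (hist ++ [r]) C'

lemma marginal {n : ℕ} (K : Kernel n) (σ : List (Fin n)) :
    ∀ (i : ℕ) (hist : List (Fin n)) (C d : Finset (Fin n)), i ≤ σ.length →
    ∀ g : Finset (Fin n) → ℝ≥0∞,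
    ∑' Cs, g ((C :: Cs).getD i d) * runFrom K σ hist C Cs
      = ∑' D, g D * confDistFrom K (σ.take i) hist C D := by
  induction σ with
  | nil =>
    intro i hist C d hi g
    obtain rfl : i = 0 := Nat.le_zero.mp (by simpa using hi)
    simp only [runFrom, confDistFrom, List.take_nil, PMF.pure_apply, mul_ite, mul_one, mul_zero,
      List.getD_cons_zero]
    rw [tsum_eq_single ([] : List (Finset (Fin n))) fun b hb => if_neg hb,
      tsum_eq_single C fun b hb => if_neg hb, if_pos rfl, if_pos rfl]
  | cons r rest ih =>
    intro i hist C d hi g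
    match i with
    | 0 =>
      simp only [List.getD_cons_zero, List.take_zero, confDistFrom]
      rw [ENNReal.tsum_mul_left]
      simp only [(runFrom K (r :: rest) hist C).tsum_coe, mul_one, PMF.pure_apply,
        mul_ite, mul_zero]
      exact ((tsum_eq_single C fun b hb => if_neg hb).trans (if_pos rfl)).symm
    | (j+1) =>
      simp only [runFrom, List.take_succ_cons, confDistFrom]
      rw [tsum_mul_bind, tsum_mul_bind]
      refine tsum_congr fun C' => ?_
      congr 1
      rw [tsum_mul_map]
      simp only [List.getD_cons_succ]
      exact ih j (hist ++ [r]) C' d (by simpa using hi) g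

lemma confDistFrom_snoc {n : ℕ} (K : Kernel n) (r : Fin n)
    (π hist : List (Fin n)) (C : Finset (Fin n)) :
    confDistFrom K (π ++ [r]) hist C
      = (confDistFrom K π hist C).bind fun D => K (hist ++ π) D r := by
  induction π generalizing hist C with
  | nil => simp [confDistFrom]
  | cons a π ih =>
    simp only [List.cons_append, confDistFrom]
    rw [PMF.bind_bind]
    refine congrArg _ (funext fun C' => ?_)
    rw [ih]
    simp


lemma initConf_card (k n : ℕ) (hkn : k ≤ n) : (initConf k n).card = k := by
  have himg : (initConf k n).image Fin.val = Finset.range k := by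
    ext a
    simp only [initConf, Finset.mem_image, Finset.mem_filter, Finset.mem_univ, true_and,
      Finset.mem_range]
    constructor
    · rintro ⟨v, h, rfl⟩; exact h
    · intro h; exact ⟨⟨a, lt_of_lt_of_le h hkn⟩, h, rfl⟩
  calc (initConf k n).card = ((initConf k n).image Fin.val).card :=
        (Finset.card_image_of_injective _ Fin.val_injective).symm
    _ = k := by rw [himg, Finset.card_range]

lemma marks_phase {n : ℕ} (k : ℕ) (hk : 1 ≤ k) (hkn : k ≤ n) (π : List (Fin n)) :
    marksAfter k π = (phaseState k π).cur ∧ (phaseState k π).prev.card = k ∧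
      (phaseState k π).cur.card ≤ k := by
  induction π using List.reverseRecOn with
  | nil => exact ⟨rfl, initConf_card k n hkn, le_of_eq (initConf_card k n hkn)⟩
  | append_singleton π r ih =>
    obtain ⟨hM, hprev, hcur⟩ := ih
    have hm : marksAfter k (π ++ [r]) = markUpdate k (marksAfter k π) r := by
      simp [marksAfter]
    have hp : phaseState k (π ++ [r]) = phaseStep k (phaseState k π) r := by
      simp [phaseState]
    rw [hm, hp, hM]
    set p := phaseState k π
    by_cases hr : r ∈ p.cur
    · have : markUpdate k p.cur r = p.cur := by
        rw [markUpdate, Finset.insert_eq_self.mpr hr, if_neg (by omega)]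
      rw [this, phaseStep, if_pos hr]
      exact ⟨rfl, hprev, hcur⟩
    · by_cases hfull : p.cur.card = k
      · have : markUpdate k p.cur r = {r} := by
          rw [markUpdate, if_pos (by rw [Finset.card_insert_of_notMem hr, hfull])]
        rw [this, phaseStep, if_neg hr, if_pos hfull]
        exact ⟨rfl, hfull, by simpa using hk⟩
      · have : markUpdate k p.cur r = insert r p.cur := by
          rw [markUpdate, if_neg (by rw [Finset.card_insert_of_notMem hr]; omega)]
        rw [this, phaseStep, if_neg hr, if_neg hfull]
        exact ⟨rfl, hprev, by rw [Finset.card_insert_of_notMem hr]; omega⟩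


/-- The set of possible configurations at phase state `p`. -/
def goodSet {n : ℕ} (k : ℕ) (p : PhaseSt n) : Finset (Finset (Fin n)) :=
  ((p.prev \ p.cur).powersetCard (k - p.cur.card)).image (fun S => p.cur ∪ S)

lemma union_cancel {α : Type*} [DecidableEq α] {B X Y : Finset α}
    (hX : Disjoint B X) (hY : Disjoint B Y) (h : B ∪ X = B ∪ Y) : X = Y := by
  rw [← Finset.union_sdiff_cancel_left hX, h, Finset.union_sdiff_cancel_left hY]

lemma exists_insert_of_card_succ {α : Type*} [DecidableEq α] {S T : Finset α}
    (hT : T ⊆ S) (hc : S.card = T.card + 1) : ∃ u, u ∉ T ∧ u ∈ S ∧ S = insert u T := by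
  have h1 : (S \ T).card = 1 := by rw [Finset.card_sdiff_of_subset hT, hc]; omega
  obtain ⟨u, hu⟩ := Finset.card_eq_one.mp h1
  have hu1 : u ∈ S \ T := hu ▸ Finset.mem_singleton_self u
  have huS : u ∈ S := (Finset.mem_sdiff.mp hu1).1
  have huT : u ∉ T := (Finset.mem_sdiff.mp hu1).2
  refine ⟨u, huT, huS, ?_⟩
  apply (Finset.eq_of_subset_of_card_le ?_ ?_).symm
  · intro x hx
    rcases Finset.mem_insert.mp hx with rfl | hx
    · exact huS
    · exact hT hx
  · rw [hc, Finset.card_insert_of_notMem huT]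

lemma count_supersets {α : Type*} [DecidableEq α] (X T : Finset α) (hT : T ⊆ X) :
    ((X.powersetCard (T.card + 1)).filter (fun S => T ⊆ S)).card = X.card - T.card := by
  rw [← Finset.card_sdiff_of_subset hT]
  refine (Finset.card_bij (fun (u : α) (_ : u ∈ X \ T) => insert u T) ?_ ?_ ?_).symm
  · intro u hu
    rw [Finset.mem_sdiff] at hu
    simp only [Finset.mem_filter, Finset.mem_powersetCard]
    exact ⟨⟨Finset.insert_subset hu.1 hT, Finset.card_insert_of_notMem hu.2⟩,
      Finset.subset_insert u T⟩
  · intro u1 h1 u2 h2 h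
    rw [Finset.mem_sdiff] at h1 h2
    have : u1 ∈ insert u2 T := h ▸ Finset.mem_insert_self u1 T
    rcases Finset.mem_insert.mp this with h' | h'
    · exact h'
    · exact absurd h' h1.2
  · intro S hS
    simp only [Finset.mem_filter, Finset.mem_powersetCard] at hS
    obtain ⟨u, huT, huS, rfl⟩ := exists_insert_of_card_succ hS.2 hS.1.2
    exact ⟨u, Finset.mem_sdiff.mpr ⟨hS.1.1 huS, huT⟩, rfl⟩

lemma uniform_map_apply_eq {α β : Type*} [DecidableEq β] (S : Finset α) (hS : S.Nonempty)
    (f : α → β) (D : β) (hf : Set.InjOn f S) :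
    (PMF.uniformOfFinset S hS).map f D = if D ∈ S.image f then (S.card : ℝ≥0∞)⁻¹ else 0 := by
  rw [PMF.map_apply]
  by_cases hD : D ∈ S.image f
  · obtain ⟨a₀, ha₀, rfl⟩ := Finset.mem_image.mp hD
    rw [if_pos hD, tsum_eq_single a₀ ?_]
    · rw [if_pos rfl, PMF.uniformOfFinset_apply, if_pos ha₀]
    · intro b hb
      by_cases hbS : b ∈ S
      · by_cases hfb : f a₀ = f b
        · exact absurd (hf hbS ha₀ hfb.symm) hb
        · rw [if_neg hfb]
      · rw [PMF.uniformOfFinset_apply, if_neg hbS, ite_self]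
  · rw [if_neg hD]
    refine ENNReal.tsum_eq_zero.mpr fun a => ?_
    by_cases haS : a ∈ S
    · rw [if_neg fun h => hD (Finset.mem_image.mpr ⟨a, haS, h.symm⟩)]
    · rw [PMF.uniformOfFinset_apply, if_neg haS, ite_self]


lemma bind_uniform {α : Type*} (A A' : Finset α) (hA : A.Nonempty) (hA' : A'.Nonempty)
    (κ : α → PMF α)
    (h0 : ∀ D ∉ A', ∀ C ∈ A, κ C D = 0)
    (h1 : ∀ D ∈ A', (∑ C ∈ A, κ C D) * (A'.card : ℝ≥0∞) = (A.card : ℝ≥0∞)) :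
    (PMF.uniformOfFinset A hA).bind κ = PMF.uniformOfFinset A' hA' := by
  ext D
  rw [PMF.bind_apply, PMF.uniformOfFinset_apply]
  have hsum : ∑' C, (PMF.uniformOfFinset A hA) C * κ C D
      = (A.card : ℝ≥0∞)⁻¹ * ∑ C ∈ A, κ C D := by
    rw [tsum_eq_sum (s := A) (fun C hC => by
      rw [PMF.uniformOfFinset_apply, if_neg hC, zero_mul]), Finset.mul_sum]
    exact Finset.sum_congr rfl fun C hC => by rw [PMF.uniformOfFinset_apply, if_pos hC]
  rw [hsum]
  have hA0 : (A.card : ℝ≥0∞) ≠ 0 := Nat.cast_ne_zero.mpr hA.card_pos.ne'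
  have hA'0 : (A'.card : ℝ≥0∞) ≠ 0 := Nat.cast_ne_zero.mpr hA'.card_pos.ne'
  by_cases hD : D ∈ A'
  · rw [if_pos hD]
    have hs : ∑ C ∈ A, κ C D = (A.card : ℝ≥0∞) * (A'.card : ℝ≥0∞)⁻¹ := by
      rw [← h1 D hD, mul_assoc, ENNReal.mul_inv_cancel hA'0 (ENNReal.natCast_ne_top _), mul_one]
    rw [hs, ← mul_assoc, ENNReal.inv_mul_cancel hA0 (ENNReal.natCast_ne_top _), one_mul]
  · rw [if_neg hD, Finset.sum_eq_zero (h0 D hD), mul_zero]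

lemma disjoint_of_subset_sdiff {α : Type*} [DecidableEq α] {B X S : Finset α}
    (h : S ⊆ X \ B) : Disjoint B S :=
  Finset.disjoint_left.mpr fun a haB haS => absurd haB (Finset.mem_sdiff.mp (h haS)).2

lemma goodSet_card {n k : ℕ} (p : PhaseSt n) :
    (goodSet k p).card = ((p.prev \ p.cur).card).choose (k - p.cur.card) := by
  rw [goodSet, Finset.card_image_of_injOn, Finset.card_powersetCard]
  intro S hS S' hS' h
  rw [Finset.mem_coe, Finset.mem_powersetCard] at hS hS'
  exact union_cancel (disjoint_of_subset_sdiff hS.1) (disjoint_of_subset_sdiff hS'.1) h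

lemma goodSet_nonempty {n k : ℕ} {p : PhaseSt n} (h : p.prev.card = k) :
    (goodSet k p).Nonempty := by
  apply Finset.Nonempty.image
  rw [Finset.powersetCard_nonempty]
  calc k - p.cur.card = p.prev.card - p.cur.card := by rw [h]
    _ ≤ (p.prev \ p.cur).card := Finset.le_card_sdiff _ _

lemma mem_goodSet {n k : ℕ} {p : PhaseSt n} {D : Finset (Fin n)} :
    D ∈ goodSet k p ↔ ∃ T, T ⊆ p.prev \ p.cur ∧ T.card = k - p.cur.card ∧ D = p.cur ∪ T := by
  simp only [goodSet, Finset.mem_image, Finset.mem_powersetCard]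
  constructor
  · rintro ⟨T, ⟨h1, h2⟩, rfl⟩; exact ⟨T, h1, h2, rfl⟩
  · rintro ⟨T, h1, h2, rfl⟩; exact ⟨T, ⟨h1, h2⟩, rfl⟩


/-- One transition of the marking algorithm with mark set `M`. -/
noncomputable def evictStep {n : ℕ} (M : Finset (Fin n)) (r : Fin n) (C : Finset (Fin n)) :
    PMF (Finset (Fin n)) :=
  if r ∈ C then PMF.pure C
  else if h : (C \ M).Nonempty then
    (PMF.uniformOfFinset (C \ M) h).map fun u => insert r (C.erase u)
  else PMF.pure (insert r (C.erase (if h2 : C.Nonempty then C.min' h2 else r)))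


lemma insert_union_erase {n : ℕ} (cur S : Finset (Fin n)) (r u : Fin n)
    (huc : u ∉ cur) :
    insert r ((cur ∪ S).erase u) = insert r cur ∪ S.erase u := by
  ext x
  have hcu : x ∈ cur → x ≠ u := fun h hq => huc (hq ▸ h)
  simp only [Finset.mem_insert, Finset.mem_erase, Finset.mem_union]
  tauto

lemma nat_choose_pred (k : ℕ) (hk : 1 ≤ k) : k.choose (k - 1) = k := by
  rw [← Nat.choose_symm (Nat.sub_le k 1)]
  have : k - (k - 1) = 1 := by omega
  rw [this, Nat.choose_one_right]


lemma arith_stale (s j : ℕ) (h1 : 1 ≤ j) (h2 : j ≤ s) :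
    (1 + ((s - j : ℕ) : ℝ≥0∞) * (j : ℝ≥0∞)⁻¹) * (((s - 1).choose (j - 1) : ℕ) : ℝ≥0∞)
      = ((s.choose j : ℕ) : ℝ≥0∞) := by
  have hj0 : (j : ℝ≥0∞) ≠ 0 := Nat.cast_ne_zero.mpr (by omega)
  have hjt : (j : ℝ≥0∞) ≠ ⊤ := ENNReal.natCast_ne_top _
  have hnat : s * (s - 1).choose (j - 1) = j * s.choose j := by
    have h := Nat.add_one_mul_choose_eq (s - 1) (j - 1)
    have hs : s - 1 + 1 = s := by omega
    have hjj : j - 1 + 1 = j := by omega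
    simp only [Nat.succ_eq_add_one, hs, hjj] at h
    rw [h, Nat.mul_comm]
  have hadd : j + (s - j) = s := by omega
  have key : (1 : ℝ≥0∞) + ((s - j : ℕ) : ℝ≥0∞) * (j : ℝ≥0∞)⁻¹ = (s : ℝ≥0∞) * (j : ℝ≥0∞)⁻¹ := by
    have hcast : ((s : ℕ) : ℝ≥0∞) = (j : ℝ≥0∞) + ((s - j : ℕ) : ℝ≥0∞) := by
      rw [← Nat.cast_add, hadd]
    rw [hcast, add_mul, ENNReal.mul_inv_cancel hj0 hjt]
  calc (1 + ((s - j : ℕ) : ℝ≥0∞) * (j : ℝ≥0∞)⁻¹) * (((s - 1).choose (j - 1) : ℕ) : ℝ≥0∞)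
      = ((s : ℝ≥0∞) * (j : ℝ≥0∞)⁻¹) * (((s - 1).choose (j - 1) : ℕ) : ℝ≥0∞) := by
        rw [key]
    _ = (j : ℝ≥0∞)⁻¹ * ((s : ℝ≥0∞) * (((s - 1).choose (j - 1) : ℕ) : ℝ≥0∞)) := by ring
    _ = (j : ℝ≥0∞)⁻¹ * ((j : ℝ≥0∞) * ((s.choose j : ℕ) : ℝ≥0∞)) := by
        rw [← Nat.cast_mul, hnat, Nat.cast_mul]
    _ = ((s.choose j : ℕ) : ℝ≥0∞) := by
        rw [← mul_assoc, ENNReal.inv_mul_cancel hj0 hjt, one_mul]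

lemma arith_clean (s j : ℕ) (h1 : 1 ≤ j) (h2 : j ≤ s) :
    ((s - (j - 1) : ℕ) : ℝ≥0∞) * (j : ℝ≥0∞)⁻¹ * ((s.choose (j - 1) : ℕ) : ℝ≥0∞)
      = ((s.choose j : ℕ) : ℝ≥0∞) := by
  have hj0 : (j : ℝ≥0∞) ≠ 0 := Nat.cast_ne_zero.mpr (by omega)
  have hjt : (j : ℝ≥0∞) ≠ ⊤ := ENNReal.natCast_ne_top _
  have hnat : (s - (j - 1)) * s.choose (j - 1) = j * s.choose j := by
    have h := Nat.choose_succ_right_eq s (j - 1)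
    have hjj : j - 1 + 1 = j := by omega
    simp only [Nat.succ_eq_add_one, hjj] at h
    rw [Nat.mul_comm, ← h, Nat.mul_comm]
  calc ((s - (j - 1) : ℕ) : ℝ≥0∞) * (j : ℝ≥0∞)⁻¹ * ((s.choose (j - 1) : ℕ) : ℝ≥0∞)
      = (j : ℝ≥0∞)⁻¹ * (((s - (j - 1) : ℕ) : ℝ≥0∞) * ((s.choose (j - 1) : ℕ) : ℝ≥0∞)) := by
        ring
    _ = (j : ℝ≥0∞)⁻¹ * ((j : ℝ≥0∞) * ((s.choose j : ℕ) : ℝ≥0∞)) := by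
        rw [← Nat.cast_mul, hnat, Nat.cast_mul]
    _ = ((s.choose j : ℕ) : ℝ≥0∞) := by
        rw [← mul_assoc, ENNReal.inv_mul_cancel hj0 hjt, one_mul]

lemma key_inv (k n : ℕ) (hk : 1 ≤ k) (hkn : k ≤ n) (π : List (Fin n)) :
    confDistFrom (markingKernel k n) π [] (initConf k n)
      = PMF.uniformOfFinset (goodSet k (phaseState k π))
          (goodSet_nonempty (marks_phase k hk hkn π).2.1) := by
  induction π using List.reverseRecOn with
  | nil =>
    have hps : phaseState k ([] : List (Fin n)) = ⟨initConf k n, initConf k n⟩ := rfl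
    ext D
    rw [show confDistFrom (markingKernel k n) [] [] (initConf k n) = PMF.pure (initConf k n)
        from rfl]
    rw [PMF.pure_apply, PMF.uniformOfFinset_apply]
    have hgs : goodSet k (phaseState k ([] : List (Fin n))) = {initConf k n} := by
      rw [hps, goodSet]
      simp [Finset.sdiff_self, initConf_card k n hkn]
    rw [hgs]
    simp [eq_comm]
  | append_singleton π r ih =>
    obtain ⟨hM, hprev, hcur⟩ := marks_phase k hk hkn π
    rw [confDistFrom_snoc, ih]
    simp only [List.nil_append]
    set p := phaseState k π with hp
    have hps : phaseState k (π ++ [r]) = phaseStep k p r := by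
      rw [phaseState, List.foldl_append]; rfl
    have hm : marksAfter k (π ++ [r]) = markUpdate k p.cur r := by
      simp only [marksAfter, List.foldl_append, List.foldl_cons, List.foldl_nil]
      rw [← marksAfter, hM]
    have hker : (fun C => markingKernel k n π C r)
        = fun C => evictStep (markUpdate k p.cur r) r C := by
      funext C
      simp only [markingKernel, evictStep, hm]
    rw [hker]
    by_cases hrc : r ∈ p.cur
    · -- request already in current phase: nothing changes
      have hstep : phaseStep k p r = p := by rw [phaseStep, if_pos hrc]
      have hgs : goodSet k (phaseState k (π ++ [r])) = goodSet k p := by rw [hps, hstep]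
      refine bind_uniform (goodSet k p) (goodSet k (phaseState k (π ++ [r]))) _ _ _ ?_ ?_
      · intro D hD C hC
        have hrC : r ∈ C := by
          obtain ⟨T, _, _, rfl⟩ := mem_goodSet.mp hC
          exact Finset.mem_union_left _ hrc
        rw [evictStep, if_pos hrC, PMF.pure_apply]
        rw [hgs] at hD
        exact if_neg (by rintro rfl; exact hD hC)
      · intro D hD
        rw [hgs] at hD
        rw [hgs]
        have : ∀ C ∈ goodSet k p, evictStep (markUpdate k p.cur r) r C D
            = if D = C then 1 else 0 := by
          intro C hC
          have hrC : r ∈ C := by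
            obtain ⟨T, _, _, rfl⟩ := mem_goodSet.mp hC
            exact Finset.mem_union_left _ hrc
          rw [evictStep, if_pos hrC, PMF.pure_apply]
          by_cases h : D = C <;> simp [h]
        rw [Finset.sum_congr rfl this]
        simp [Finset.sum_ite_eq, hD]
    · by_cases hfull : p.cur.card = k
      · -- new phase
        have hgsA : goodSet k p = {p.cur} := by
          rw [goodSet, hfull, Nat.sub_self, Finset.powersetCard_zero, Finset.image_singleton,
            Finset.union_empty]
        have hmu : markUpdate k p.cur r = {r} := by
          rw [markUpdate, if_pos (by rw [Finset.card_insert_of_notMem hrc, hfull])]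
        have hstep : phaseStep k p r = ⟨p.cur, {r}⟩ := by
          rw [phaseStep, if_neg hrc, if_pos hfull]
        have hcur0 : p.cur.Nonempty := Finset.card_pos.mp (by omega)
        have hSt' : (phaseState k (π ++ [r])).prev \ (phaseState k (π ++ [r])).cur = p.cur := by
          rw [hps, hstep]
          simp only
          rw [Finset.sdiff_singleton_eq_erase, Finset.erase_eq_self.mpr hrc]
        have hcurk : (phaseState k (π ++ [r])).cur.card = 1 := by rw [hps, hstep]; rfl
        have hprev' : (phaseState k (π ++ [r])).cur = {r} := by rw [hps, hstep]
        -- the eviction map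
        have hf : ∀ u ∈ p.cur, insert r (p.cur.erase u) = {r} ∪ p.cur.erase u := by
          intro u hu; rw [Finset.insert_eq]
        have himgmem : ∀ u ∈ p.cur,
            insert r (p.cur.erase u) ∈ goodSet k (phaseState k (π ++ [r])) := by
          intro u hu
          rw [mem_goodSet]
          refine ⟨p.cur.erase u, ?_, ?_, ?_⟩
          · rw [hSt']; exact Finset.erase_subset _ _
          · rw [hcurk, Finset.card_erase_of_mem hu, hfull]
          · rw [hprev', hf u hu]
        have hinj : Set.InjOn (fun u => insert r (p.cur.erase u)) p.cur := by
          intro u hu v hv h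
          simp only at h
          have h2 : ∀ w ∈ p.cur, (insert r (p.cur.erase w)).erase r = p.cur.erase w := by
            intro w hw
            exact Finset.erase_insert (fun hc => hrc (Finset.mem_of_mem_erase hc))
          have := (h2 u hu).symm.trans (congrArg (fun X => Finset.erase X r) h) |>.trans (h2 v hv)
          exact Finset.erase_injOn _ hu hv this
        have hval : evictStep {r} r p.cur
            = (PMF.uniformOfFinset (p.cur \ {r}) (by
                rw [Finset.sdiff_singleton_eq_erase, Finset.erase_eq_self.mpr hrc]
                exact hcur0)).map fun u => insert r (p.cur.erase u) := by
          rw [evictStep, if_neg hrc, dif_pos]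
        have hsd : p.cur \ {r} = p.cur := by
          rw [Finset.sdiff_singleton_eq_erase, Finset.erase_eq_self.mpr hrc]
        refine bind_uniform (goodSet k p) (goodSet k (phaseState k (π ++ [r]))) _ _ _ ?_ ?_
        · intro D hD C hC
          rw [hgsA, Finset.mem_singleton] at hC
          subst hC
          rw [hmu, hval]
          have := uniform_map_apply_eq (p.cur \ {r}) (by rw [hsd]; exact hcur0)
            (fun u => insert r (p.cur.erase u)) D (by rw [hsd]; exact hinj)
          rw [this, if_neg]
          intro hmem
          rw [hsd] at hmem
          obtain ⟨u, hu, rfl⟩ := Finset.mem_image.mp hmem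
          exact hD (himgmem u hu)
        · intro D hD
          rw [hgsA, Finset.sum_singleton, hmu, hval]
          have := uniform_map_apply_eq (p.cur \ {r}) (by rw [hsd]; exact hcur0)
            (fun u => insert r (p.cur.erase u)) D (by rw [hsd]; exact hinj)
          rw [this, if_pos, hsd, hfull]
          · -- (k)⁻¹ * |A'| = 1
            rw [goodSet_card, hps, hstep]
            simp only
            rw [Finset.sdiff_singleton_eq_erase, Finset.erase_eq_self.mpr hrc,
              Finset.card_singleton, hfull, nat_choose_pred k hk, Finset.card_singleton,
              Nat.cast_one, ENNReal.inv_mul_cancel (Nat.cast_ne_zero.mpr (by omega))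
                (ENNReal.natCast_ne_top _)]
          · -- D is in the image
            rw [hsd]
            obtain ⟨T, hT1, hT2, rfl⟩ := mem_goodSet.mp hD
            rw [hSt'] at hT1
            rw [hcurk] at hT2
            have hTc : p.cur.card = T.card + 1 := by rw [hfull, hT2]; omega
            obtain ⟨u, huT, huc, hcurEq⟩ := exists_insert_of_card_succ hT1 hTc
            refine Finset.mem_image.mpr ⟨u, huc, ?_⟩
            rw [hcurEq, Finset.erase_insert huT, hprev', Finset.insert_eq]

      · -- within phase: r is clean or stale
        have hlt : p.cur.card < k := lt_of_le_of_ne hcur hfull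
        have hmu : markUpdate k p.cur r = insert r p.cur := by
          rw [markUpdate, if_neg]
          rw [Finset.card_insert_of_notMem hrc]; omega
        have hstep : phaseStep k p r = ⟨p.prev, insert r p.cur⟩ := by
          rw [phaseStep, if_neg hrc, if_neg hfull]
        have hj1 : 1 ≤ k - p.cur.card := by omega
        have hjs : k - p.cur.card ≤ (p.prev \ p.cur).card := by
          calc k - p.cur.card = p.prev.card - p.cur.card := by rw [hprev]
            _ ≤ (p.prev \ p.cur).card := Finset.le_card_sdiff _ _
        have hSt' : p.prev \ insert r p.cur = (p.prev \ p.cur).erase r := by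
          ext x
          simp only [Finset.mem_sdiff, Finset.mem_erase, Finset.mem_insert, not_or]
          tauto
        have hQ'card : (insert r p.cur).card = p.cur.card + 1 :=
          Finset.card_insert_of_notMem hrc
        have hj' : k - (insert r p.cur).card = k - p.cur.card - 1 := by rw [hQ'card]; omega
        have hp'prev : (phaseState k (π ++ [r])).prev = p.prev := by rw [hps, hstep]
        have hp'cur : (phaseState k (π ++ [r])).cur = insert r p.cur := by rw [hps, hstep]
        have hmemA' : ∀ D, D ∈ goodSet k (phaseState k (π ++ [r])) ↔
            ∃ T, T ⊆ (p.prev \ p.cur).erase r ∧ T.card = k - p.cur.card - 1 ∧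
              D = insert r p.cur ∪ T := by
          intro D; rw [mem_goodSet, hp'prev, hp'cur, hSt', hj']
        have hdisjQ' : ∀ T : Finset (Fin n), T ⊆ (p.prev \ p.cur).erase r →
            Disjoint (insert r p.cur) T := by
          intro T hT
          rw [Finset.disjoint_left]
          intro a haQ haT
          have h2 := hT haT
          rw [Finset.mem_erase] at h2
          rcases Finset.mem_insert.mp haQ with rfl | haC
          · exact h2.1 rfl
          · exact (Finset.mem_sdiff.mp h2.2).2 haC
        have hCdiff : ∀ S : Finset (Fin n), S ⊆ p.prev \ p.cur → r ∉ S →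
            (p.cur ∪ S) \ insert r p.cur = S := by
          intro S hS hrS
          ext x
          simp only [Finset.mem_sdiff, Finset.mem_union, Finset.mem_insert, not_or]
          constructor
          · rintro ⟨hx | hx, hxr, hxc⟩
            · exact absurd hx hxc
            · exact hx
          · intro hx
            have hxSt := hS hx
            rw [Finset.mem_sdiff] at hxSt
            exact ⟨Or.inr hx, fun h => hrS (h ▸ hx), hxSt.2⟩
        have heraseSub : ∀ S : Finset (Fin n), S ⊆ p.prev \ p.cur → r ∉ S → ∀ u,
            S.erase u ⊆ (p.prev \ p.cur).erase r := by
          intro S hS hrS u x hx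
          have hxS := Finset.mem_of_mem_erase hx
          exact Finset.mem_erase.mpr ⟨fun h => hrS (h ▸ hxS), hS hxS⟩
        have hcurdisj : ∀ S : Finset (Fin n), S ⊆ p.prev \ p.cur → ∀ u ∈ S, u ∉ p.cur := by
          intro S hS u hu
          exact (Finset.mem_sdiff.mp (hS hu)).2
        -- value of the kernel on a good configuration when `r ∉ S`
        have hevalS : ∀ S : Finset (Fin n), S ⊆ p.prev \ p.cur →
            S.card = k - p.cur.card → r ∉ S → ∀ D,
            evictStep (insert r p.cur) r (p.cur ∪ S) D
              = if D ∈ S.image (fun u => insert r p.cur ∪ S.erase u)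
                then ((k - p.cur.card : ℕ) : ℝ≥0∞)⁻¹ else 0 := by
          intro S hS hScard hrS D
          have hrC : r ∉ p.cur ∪ S := by
            rw [Finset.mem_union]; rintro (h | h); exacts [hrc h, hrS h]
          have hne : ((p.cur ∪ S) \ insert r p.cur).Nonempty := by
            rw [hCdiff S hS hrS]
            exact Finset.card_pos.mp (by omega)
          rw [evictStep, if_neg hrC, dif_pos hne]
          have hinjS : Set.InjOn (fun u => insert r ((p.cur ∪ S).erase u))
              ((p.cur ∪ S) \ insert r p.cur : Finset (Fin n)) := by
            intro u hu v hv h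
            rw [Finset.mem_coe, hCdiff S hS hrS] at hu hv
            simp only at h
            rw [insert_union_erase p.cur S r u (hcurdisj S hS u hu),
              insert_union_erase p.cur S r v (hcurdisj S hS v hv)] at h
            have := union_cancel (hdisjQ' _ (heraseSub S hS hrS u))
              (hdisjQ' _ (heraseSub S hS hrS v)) h
            exact Finset.erase_injOn S hu hv this
          rw [uniform_map_apply_eq _ hne _ D hinjS, hCdiff S hS hrS, hScard]
          congr 1
          refine propext (Iff.of_eq (congrArg (D ∈ ·) ?_))
          refine Finset.image_congr ?_
          intro u hu
          exact insert_union_erase p.cur S r u (hcurdisj S hS u (Finset.mem_coe.mp hu))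
        -- key rewriting for configurations containing r
        have hCr : ∀ S : Finset (Fin n), r ∈ S →
            p.cur ∪ S = insert r p.cur ∪ S.erase r := by
          intro S hrS
          ext x
          have hxr : x = r → x ∈ S := fun h => h ▸ hrS
          simp only [Finset.mem_union, Finset.mem_insert, Finset.mem_erase]
          by_cases h : x = r <;> tauto
        refine bind_uniform (goodSet k p) (goodSet k (phaseState k (π ++ [r]))) _ _ _ ?_ ?_
        · -- h0 : vanishing off the new good set
          intro D hD C hC
          obtain ⟨S, hS1, hS2, rfl⟩ := mem_goodSet.mp hC
          rw [hmu]
          by_cases hrS : r ∈ S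
          · have hrC : r ∈ p.cur ∪ S := Finset.mem_union_right _ hrS
            rw [evictStep, if_pos hrC, PMF.pure_apply]
            refine if_neg ?_
            rintro rfl
            refine hD ((hmemA' _).mpr ⟨S.erase r, ?_, ?_, ?_⟩)
            · exact Finset.erase_subset_erase r hS1
            · rw [Finset.card_erase_of_mem hrS, hS2]
            · exact hCr S hrS
          · rw [hevalS S hS1 hS2 hrS D, if_neg]
            intro hmem
            obtain ⟨u, hu, rfl⟩ := Finset.mem_image.mp hmem
            refine hD ((hmemA' _).mpr ⟨S.erase u, heraseSub S hS1 hrS u, ?_, rfl⟩)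
            rw [Finset.card_erase_of_mem hu, hS2]
        · -- h1 : the key counting identity
          intro D hD
          obtain ⟨T, hT1, hT2, rfl⟩ := (hmemA' _).mp hD
          have hrT : r ∉ T := fun h => absurd (Finset.mem_erase.mp (hT1 h)).1 (by simp)
          have hTsub : T ⊆ p.prev \ p.cur := hT1.trans (Finset.erase_subset _ _)
          have hTc1 : T.card + 1 = k - p.cur.card := by omega
          rw [hmu]
          have hgsum : ∑ C ∈ goodSet k p,
              evictStep (insert r p.cur) r C (insert r p.cur ∪ T)
              = ∑ S ∈ (p.prev \ p.cur).powersetCard (k - p.cur.card),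
                  evictStep (insert r p.cur) r (p.cur ∪ S) (insert r p.cur ∪ T) := by
            rw [goodSet]
            refine Finset.sum_image ?_
            intro S hS S' hS' h
            rw [Finset.mem_coe, Finset.mem_powersetCard] at hS hS'
            exact union_cancel (disjoint_of_subset_sdiff hS.1)
              (disjoint_of_subset_sdiff hS'.1) h
          rw [hgsum, ← Finset.sum_filter_add_sum_filter_not
            ((p.prev \ p.cur).powersetCard (k - p.cur.card)) (fun S => r ∈ S)]
          have hone : ∀ S ∈ ((p.prev \ p.cur).powersetCard (k - p.cur.card)).filter
              (fun S => r ∈ S),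
              evictStep (insert r p.cur) r (p.cur ∪ S) (insert r p.cur ∪ T)
                = if S = insert r T then 1 else 0 := by
            intro S hS
            rw [Finset.mem_filter, Finset.mem_powersetCard] at hS
            obtain ⟨⟨hSsub, hScard⟩, hrS⟩ := hS
            have hrC : r ∈ p.cur ∪ S := Finset.mem_union_right _ hrS
            rw [evictStep, if_pos hrC, PMF.pure_apply]
            have hiff : (insert r p.cur ∪ T = p.cur ∪ S) ↔ S = insert r T := by
              constructor
              · intro h
                rw [hCr S hrS] at h
                have hTe := union_cancel (hdisjQ' T hT1)
                  (hdisjQ' _ (Finset.erase_subset_erase r hSsub)) h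
                rw [hTe, Finset.insert_erase hrS]
              · rintro rfl
                rw [hCr (insert r T) (Finset.mem_insert_self r T), Finset.erase_insert hrT]
            by_cases h : S = insert r T
            · rw [if_pos h, if_pos (hiff.mpr h)]
            · rw [if_neg h, if_neg (fun hc => h (hiff.mp hc))]
          have htwo : ∀ S ∈ ((p.prev \ p.cur).powersetCard (k - p.cur.card)).filter
              (fun S => r ∉ S),
              evictStep (insert r p.cur) r (p.cur ∪ S) (insert r p.cur ∪ T)
                = if T ⊆ S then ((k - p.cur.card : ℕ) : ℝ≥0∞)⁻¹ else 0 := by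
            intro S hS
            rw [Finset.mem_filter, Finset.mem_powersetCard] at hS
            obtain ⟨⟨hSsub, hScard⟩, hrS⟩ := hS
            rw [hevalS S hSsub hScard hrS]
            refine if_congr ?_ rfl rfl
            constructor
            · intro hmem
              obtain ⟨u, hu, hEq⟩ := Finset.mem_image.mp hmem
              have := union_cancel (hdisjQ' _ (heraseSub S hSsub hrS u))
                (hdisjQ' T hT1) hEq
              rw [← this]
              exact Finset.erase_subset _ _
            · intro hTS
              have hcard : S.card = T.card + 1 := by rw [hScard]; omega
              obtain ⟨u, huT, huS, rfl⟩ := exists_insert_of_card_succ hTS hcard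
              exact Finset.mem_image.mpr ⟨u, Finset.mem_insert_self u T,
                by rw [Finset.erase_insert huT]⟩
          rw [Finset.sum_congr rfl hone, Finset.sum_congr rfl htwo,
            Finset.sum_ite_eq' _ (insert r T), ← Finset.sum_filter, Finset.sum_const,
            nsmul_eq_mul]
          have hXeq : (((p.prev \ p.cur).powersetCard (k - p.cur.card)).filter
                (fun S => r ∉ S)).filter (fun S => T ⊆ S)
              = (((p.prev \ p.cur).erase r).powersetCard (k - p.cur.card)).filter
                (fun S => T ⊆ S) := by
            ext S
            simp only [Finset.mem_filter, Finset.mem_powersetCard, Finset.subset_erase]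
            tauto
          have hXcard : ((((p.prev \ p.cur).powersetCard (k - p.cur.card)).filter
                (fun S => r ∉ S)).filter (fun S => T ⊆ S)).card
              = ((p.prev \ p.cur).erase r).card - T.card := by
            rw [hXeq, ← hTc1, count_supersets _ T hT1]
          rw [hXcard, goodSet_card, goodSet_card, hp'prev, hp'cur, hSt', hj']
          by_cases hrSt : r ∈ p.prev \ p.cur
          · -- stale request
            have hmem1 : insert r T ∈ ((p.prev \ p.cur).powersetCard
                (k - p.cur.card)).filter (fun S => r ∈ S) := by
              rw [Finset.mem_filter, Finset.mem_powersetCard]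
              exact ⟨⟨Finset.insert_subset hrSt hTsub,
                by rw [Finset.card_insert_of_notMem hrT]; omega⟩,
                Finset.mem_insert_self _ _⟩
            rw [if_pos hmem1, Finset.card_erase_of_mem hrSt, hT2]
            have he1 : (p.prev \ p.cur).card - 1 - (k - p.cur.card - 1)
                = (p.prev \ p.cur).card - (k - p.cur.card) := by omega
            rw [he1]
            exact arith_stale _ _ hj1 hjs
          · -- clean request
            have hmem1 : insert r T ∉ ((p.prev \ p.cur).powersetCard
                (k - p.cur.card)).filter (fun S => r ∈ S) := by
              rw [Finset.mem_filter, Finset.mem_powersetCard]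
              rintro ⟨⟨hsub, _⟩, _⟩
              exact hrSt (hsub (Finset.mem_insert_self r T))
            rw [if_neg hmem1, zero_add, Finset.erase_eq_self.mpr hrSt, hT2]
            exact arith_clean _ _ hj1 hjs


end Helpers

/-- If the request at time `i` is stale, the probability that the marking
algorithm's configuration just before serving it does not cover it is `c/s`,
where `c` is the number of clean vertices requested so far in the phase and `s`
is the current number of stale vertices (including the requested one). -/
theorem marking_stale_fault_probability (k n : ℕ) (hk : 1 ≤ k) (hkn : k < n)
    (σ : List (Fin n)) (i : Fin σ.length)
    (hstale : σ.get i ∈ (phaseState k (σ.take (i : ℕ))).prev ∧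
      σ.get i ∉ (phaseState k (σ.take (i : ℕ))).cur ∧
      (phaseState k (σ.take (i : ℕ))).cur.card < k) :
    (∑' Cs : List (Finset (Fin n)),
        if σ.get i ∈ confAt k Cs (i : ℕ) then 0
        else (run k (markingKernel k n) σ) Cs).toReal
      = (((phaseState k (σ.take (i : ℕ))).cur \ (phaseState k (σ.take (i : ℕ))).prev).card : ℝ)
        / (((phaseState k (σ.take (i : ℕ))).prev \ (phaseState k (σ.take (i : ℕ))).cur).card : ℝ) := by
  obtain ⟨hs1, hs2, hs3⟩ := hstale
  set t := (i : ℕ) with ht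
  set r := σ.get i with hr
  set π := σ.take t with hπ
  set p := phaseState k π with hp
  obtain ⟨hM, hprev, hcur⟩ := marks_phase k hk hkn.le π
  have hrSt : r ∈ p.prev \ p.cur := Finset.mem_sdiff.mpr ⟨hs1, hs2⟩
  have hj1 : 1 ≤ k - p.cur.card := by omega
  have hjs : k - p.cur.card ≤ (p.prev \ p.cur).card := by
    calc k - p.cur.card = p.prev.card - p.cur.card := by rw [hprev]
      _ ≤ (p.prev \ p.cur).card := Finset.le_card_sdiff _ _
  have hs0 : 1 ≤ (p.prev \ p.cur).card := Finset.card_pos.mpr ⟨r, hrSt⟩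
  -- rewrite the summand
  have hg : ∀ Cs : List (Finset (Fin n)),
      (if r ∈ confAt k Cs t then 0 else (run k (markingKernel k n) σ) Cs)
      = (fun D => if r ∈ D then 0 else 1) ((initConf k n :: Cs).getD t (initConf k n))
          * runFrom (markingKernel k n) σ [] (initConf k n) Cs := by
    intro Cs
    rw [confAt, run]
    show _ = (if r ∈ (initConf k n :: Cs).getD t (initConf k n) then 0 else 1) * _
    by_cases h : r ∈ (initConf k n :: Cs).getD t (initConf k n)
    · rw [if_pos h, if_pos h, zero_mul]
    · rw [if_neg h, if_neg h, one_mul]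
  rw [tsum_congr hg, marginal (markingKernel k n) σ t [] (initConf k n) (initConf k n)
    (le_of_lt i.isLt) (fun D => if r ∈ D then 0 else 1)]
  rw [← hπ, key_inv k n hk hkn.le π]
  -- evaluate the sum
  rw [tsum_eq_sum (s := goodSet k p) (fun D hD => by
    rw [PMF.uniformOfFinset_apply, if_neg hD, mul_zero])]
  have hterm : ∀ D ∈ goodSet k p,
      (if r ∈ D then 0 else 1) * (PMF.uniformOfFinset (goodSet k (phaseState k π))
        (goodSet_nonempty (marks_phase k hk hkn.le π).2.1)) D
      = if r ∉ D then ((goodSet k p).card : ℝ≥0∞)⁻¹ else 0 := by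
    intro D hD
    rw [PMF.uniformOfFinset_apply, if_pos hD]
    by_cases h : r ∈ D
    · rw [if_pos h, if_neg (by simpa using h), zero_mul]
    · rw [if_neg h, if_pos h, one_mul]
  rw [Finset.sum_congr rfl hterm, ← Finset.sum_filter, Finset.sum_const, nsmul_eq_mul]
  -- count the configurations avoiding r
  have hfilter : (goodSet k p).filter (fun D => r ∉ D)
      = (((p.prev \ p.cur).erase r).powersetCard (k - p.cur.card)).image
          (fun S => p.cur ∪ S) := by
    ext D
    simp only [Finset.mem_filter, Finset.mem_image, Finset.mem_powersetCard,
      Finset.subset_erase]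
    constructor
    · rintro ⟨hD, hnot⟩
      obtain ⟨S, hS1, hS2, rfl⟩ := mem_goodSet.mp hD
      exact ⟨S, ⟨⟨hS1, fun hrS => hnot (Finset.mem_union_right _ hrS)⟩, hS2⟩, rfl⟩
    · rintro ⟨S, ⟨⟨hS1, hrS⟩, hS2⟩, rfl⟩
      refine ⟨mem_goodSet.mpr ⟨S, hS1, hS2, rfl⟩, ?_⟩
      rw [Finset.mem_union]
      rintro (h | h)
      · exact hs2 h
      · exact hrS h
  have hfcard : ((goodSet k p).filter (fun D => r ∉ D)).card
      = (((p.prev \ p.cur).card - 1).choose (k - p.cur.card)) := by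
    rw [hfilter, Finset.card_image_of_injOn, Finset.card_powersetCard,
      Finset.card_erase_of_mem hrSt]
    intro S hS S' hS' h
    rw [Finset.mem_coe, Finset.mem_powersetCard] at hS hS'
    exact union_cancel (disjoint_of_subset_sdiff (hS.1.trans (Finset.erase_subset _ _)))
      (disjoint_of_subset_sdiff (hS'.1.trans (Finset.erase_subset _ _))) h
  rw [hfcard, goodSet_card]
  -- pass to the reals
  set sc := (p.prev \ p.cur).card with hsc
  set j := k - p.cur.card with hj
  have hchoose_pos : 0 < sc.choose j := Nat.choose_pos hjs
  rw [ENNReal.toReal_mul, ENNReal.toReal_inv]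
  simp only [ENNReal.toReal_natCast]
  have hcount : (p.cur \ p.prev).card = sc - j := by
    have h1 : (p.cur \ p.prev).card + (p.cur ∩ p.prev).card = p.cur.card :=
      Finset.card_sdiff_add_card_inter _ _
    have h2 : (p.prev \ p.cur).card + (p.prev ∩ p.cur).card = p.prev.card :=
      Finset.card_sdiff_add_card_inter _ _
    have h3 : (p.cur ∩ p.prev).card = (p.prev ∩ p.cur).card := by
      rw [Finset.inter_comm]
    have h4 : p.prev.card = k := hprev
    have h5 : p.cur.card ≤ k := hcur
    omega
  have hnat : sc * ((sc - 1).choose j) = sc.choose j * (sc - j) := by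
    have h1 := Nat.add_one_mul_choose_eq (sc - 1) j
    have hs : sc - 1 + 1 = sc := by omega
    simp only [Nat.succ_eq_add_one, hs] at h1
    have h2 := Nat.choose_succ_right_eq sc j
    omega
  rw [hcount, ← div_eq_mul_inv, div_eq_div_iff
    (by exact_mod_cast hchoose_pos.ne' : (sc.choose j : ℝ) ≠ 0)
    (by exact_mod_cast (by omega : sc ≠ 0) : (sc : ℝ) ≠ 0)]
  rw [Nat.mul_comm sc, Nat.mul_comm (sc.choose j)] at hnat
  exact_mod_cast hnat
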